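/- Define Y^{n;t}_{a,b}(L) = Σ_{λ∈ℤ}( q^{λ²tt'+λ(t'b−2ta)} T(n, a−b−t'λ, L) − q^{(λt+b)(λt'+2a)} T(n, −a−b−t'λ, L) ) with t' = 2t+1. Then for L > 0 the recurrence Y^{n;t}_{a,b}(L) = q^{L+a−b−n} Y^{n;t}_{a,b−1}(L−1) + Y^{n;t}_{a,b}(L−1) + q^{L−a+b} Y^{n+1;t}_{a,b+1}(L−1) holds. -/

import Mathlib

/- `qq` plays the role of the formal variable `q`, as an element of the
field of rational functions over `ℚ`. -/
noncomputable def qq : RatFunc ℚ := RatFunc.X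

/-- `(q)_n = ∏_{i=1}^n (1 - q^i)`. -/
noncomputable def qp (n : ℕ) : RatFunc ℚ := ∏ i ∈ Finset.range n, (1 - qq ^ (i + 1))

/-- `(q)_n` for an integer index, declared to be `0` for negative `n`
(so that terms with a negative factorial index vanish upon division). -/
noncomputable def qpz (n : ℤ) : RatFunc ℚ := if 0 ≤ n then qp n.toNat else 0

lemma qq_ne_zero : qq ≠ 0 := RatFunc.X_ne_zero

lemma qq_pow_ne_one {m : ℕ} (hm : 0 < m) : qq ^ m ≠ 1 := by
  intro h
  have : (Polynomial.X : Polynomial ℚ) ^ m = 1 := by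
    rw [qq, RatFunc.X] at h
    rw [← map_pow] at h
    have h1 : (algebraMap (Polynomial ℚ) (RatFunc ℚ)) (Polynomial.X ^ m) =
        (algebraMap (Polynomial ℚ) (RatFunc ℚ)) 1 := by simpa using h
    exact RatFunc.algebraMap_injective ℚ h1
  have := congrArg Polynomial.natDegree this
  simp [Polynomial.natDegree_X_pow] at this
  omega

lemma one_sub_qq_pow_ne {m : ℕ} (hm : 0 < m) : (1 : RatFunc ℚ) - qq ^ m ≠ 0 := by
  intro h
  exact qq_pow_ne_one hm (by linear_combination -h)

lemma qp_ne_zero (n : ℕ) : qp n ≠ 0 := by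
  rw [qp]
  exact Finset.prod_ne_zero_iff.2 fun i _ => one_sub_qq_pow_ne (Nat.succ_pos i)

lemma qq_zpow_eq_pow {m : ℤ} (h : 0 ≤ m) : qq ^ m = qq ^ m.toNat := by
  rw [← zpow_natCast, Int.toNat_of_nonneg h]

lemma one_sub_qq_zpow_ne {m : ℤ} (hm : 1 ≤ m) : (1 : RatFunc ℚ) - qq ^ m ≠ 0 := by
  rw [qq_zpow_eq_pow (by omega)]
  exact one_sub_qq_pow_ne (by omega)

lemma qpz_of_neg {m : ℤ} (h : m < 0) : qpz m = 0 := by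
  rw [qpz, if_neg (by omega)]

lemma qpz_natCast (k : ℕ) : qpz (k : ℤ) = qp k := by
  rw [qpz, if_pos (by positivity)]
  simp

lemma qpz_ne_zero {m : ℤ} (h : 0 ≤ m) : qpz m ≠ 0 := by
  rw [qpz, if_pos h]; exact qp_ne_zero _

lemma qp_succ (k : ℕ) : qp (k + 1) = qp k * (1 - qq ^ (k + 1)) := by
  rw [qp, qp, Finset.prod_range_succ]

lemma qpz_succ {m : ℤ} (h : 0 ≤ m) : qpz (m + 1) = qpz m * (1 - qq ^ (m + 1)) := by
  obtain ⟨k, rfl⟩ := Int.eq_ofNat_of_zero_le h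
  rw [show (k : ℤ) + 1 = ((k + 1 : ℕ) : ℤ) by push_cast; ring, qpz_natCast, qpz_natCast,
    qp_succ, qq_zpow_eq_pow (by positivity)]
  norm_num

lemma qpz_pred {m : ℤ} (h : 1 ≤ m) : qpz m = qpz (m - 1) * (1 - qq ^ m) := by
  have := qpz_succ (m := m - 1) (by omega)
  simpa using this

lemma qpz_zero : qpz 0 = 1 := by rw [show (0:ℤ) = ((0:ℕ):ℤ) by norm_num, qpz_natCast, qp]; simp

/-- middle-position bridge -/
lemma div_qpz_pred_mid (A B C : RatFunc ℚ) {m : ℤ} (hm : 0 ≤ m) :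
    A / (B * qpz (m - 1) * C) = A * (1 - qq ^ m) / (B * qpz m * C) := by
  rcases eq_or_lt_of_le hm with h | h
  · rw [← h, qpz_of_neg (show (0:ℤ) - 1 < 0 by norm_num)]
    simp
  · have h1 : (1 : RatFunc ℚ) - qq ^ m ≠ 0 := one_sub_qq_zpow_ne (by omega)
    rw [qpz_pred (by omega : 1 ≤ m),
      show B * (qpz (m - 1) * (1 - qq ^ m)) * C = B * qpz (m - 1) * C * (1 - qq ^ m) by ring,
      mul_div_mul_right _ _ h1]

/-- last-position bridge -/
lemma div_qpz_pred_last (A B : RatFunc ℚ) {m : ℤ} (hm : 0 ≤ m) :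
    A / (B * qpz (m - 1)) = A * (1 - qq ^ m) / (B * qpz m) := by
  rcases eq_or_lt_of_le hm with h | h
  · rw [← h, qpz_of_neg (show (0:ℤ) - 1 < 0 by norm_num)]
    simp
  · have h1 : (1 : RatFunc ℚ) - qq ^ m ≠ 0 := one_sub_qq_zpow_ne (by omega)
    rw [qpz_pred (by omega : 1 ≤ m),
      show B * (qpz (m - 1) * (1 - qq ^ m)) = B * qpz (m - 1) * (1 - qq ^ m) by ring,
      mul_div_mul_right _ _ h1]

/-- first-position bridge -/
lemma div_qpz_pred_first (A B C : RatFunc ℚ) {m : ℤ} (hm : 0 ≤ m) :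
    A / (qpz (m - 1) * B * C) = A * (1 - qq ^ m) / (qpz m * B * C) := by
  rcases eq_or_lt_of_le hm with h | h
  · rw [← h, qpz_of_neg (show (0:ℤ) - 1 < 0 by norm_num)]
    simp
  · have h1 : (1 : RatFunc ℚ) - qq ^ m ≠ 0 := one_sub_qq_zpow_ne (by omega)
    rw [qpz_pred (by omega : 1 ≤ m),
      show qpz (m - 1) * (1 - qq ^ m) * B * C = qpz (m - 1) * B * C * (1 - qq ^ m) by ring,
      mul_div_mul_right _ _ h1]

/-- summand of `qT`, with integer length argument -/
noncomputable def tz (n d Lz : ℤ) (k : ℕ) : RatFunc ℚ :=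
  qq ^ ((k : ℤ) * ((k : ℤ) + d - n)) * qpz Lz /
    (qp k * qpz ((k : ℤ) + d) * qpz (Lz - 2 * (k : ℤ) - d))

/-- telescoping certificate -/
noncomputable def Gz (n d Lz : ℤ) (k : ℕ) : RatFunc ℚ :=
  qq ^ ((k : ℤ) * ((k : ℤ) + d - n - 1) + Lz) * qpz (Lz - 1) /
    (qpz ((k : ℤ) - 1) * qpz ((k : ℤ) + d) * qpz (Lz - 2 * (k : ℤ) - d))

lemma tz_zero (n d Lz : ℤ) (k : ℕ) (h : Lz - k < 0) : tz n d Lz k = 0 := by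
  rcases le_or_gt 0 ((k : ℤ) + d) with h1 | h1
  · rw [tz, qpz_of_neg (show Lz - 2 * (k : ℤ) - d < 0 by omega)]
    simp
  · rw [tz, qpz_of_neg h1]
    simp

lemma tz_A (n d Lz : ℤ) (k : ℕ) (hLz : 1 ≤ Lz) :
    tz n d Lz k =
      qq ^ (Lz - d) * tz (n + 1) (d - 1) (Lz - 1) k + tz n d (Lz - 1) k + Gz n d Lz k := by
  rw [tz, tz, tz, Gz]
  rcases lt_or_ge ((k : ℤ) + d) 0 with hm | hm
  · rw [qpz_of_neg hm, qpz_of_neg (show (k : ℤ) + (d - 1) < 0 by omega)]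
    simp
  rcases lt_or_ge (Lz - 2 * (k : ℤ) - d) 0 with hp | hp
  · rw [qpz_of_neg hp, qpz_of_neg (show Lz - 1 - 2 * (k : ℤ) - (d - 1) < 0 by omega),
      qpz_of_neg (show Lz - 1 - 2 * (k : ℤ) - d < 0 by omega)]
    simp
  -- main case
  rw [show (k : ℤ) + (d - 1) = ((k : ℤ) + d) - 1 by ring,
    show Lz - 1 - 2 * (k : ℤ) - (d - 1) = Lz - 2 * (k : ℤ) - d by ring,
    show Lz - 1 - 2 * (k : ℤ) - d = (Lz - 2 * (k : ℤ) - d) - 1 by ring,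
    show (Lz : ℤ) = ((Lz - 1) + 1 : ℤ) by ring]
  rw [qpz_succ (show (0:ℤ) ≤ Lz - 1 by omega)]
  rw [show (Lz - 1 + 1 : ℤ) = Lz by ring]
  rw [div_qpz_pred_mid _ _ _ hm, div_qpz_pred_last _ _ hp,
    div_qpz_pred_first _ _ _ (show (0:ℤ) ≤ (k:ℤ) by positivity), qpz_natCast]
  rw [← mul_div_assoc, ← add_div, ← add_div]
  congr 1
  have hL : qq ^ Lz = qq ^ ((k : ℤ) + d) * qq ^ (Lz - 2 * (k : ℤ) - d) * qq ^ (k : ℤ) := by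
    rw [← zpow_add₀ qq_ne_zero, ← zpow_add₀ qq_ne_zero]
    congr 1
    ring
  have hg : qq ^ ((k : ℤ) * ((k : ℤ) + d - n - 1) + Lz) =
      qq ^ ((k : ℤ) * ((k : ℤ) + d - n)) * (qq ^ ((k : ℤ) + d) * qq ^ (Lz - 2 * (k : ℤ) - d)) := by
    rw [← zpow_add₀ qq_ne_zero, ← zpow_add₀ qq_ne_zero]
    congr 1
    ring
  have h1 : qq ^ (Lz - d) * qq ^ ((k : ℤ) * ((k : ℤ) + d - 1 - (n + 1))) =
      qq ^ ((k : ℤ) * ((k : ℤ) + d - n)) * qq ^ (Lz - 2 * (k : ℤ) - d) := by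
    rw [← zpow_add₀ qq_ne_zero, ← zpow_add₀ qq_ne_zero]
    congr 1
    ring
  rw [hL, hg]
  linear_combination (-(qpz (Lz - 1) * (1 - qq ^ ((k : ℤ) + d)))) * h1

lemma Gz_B (n d Lz : ℤ) (k : ℕ) :
    Gz n d Lz (k + 1) = qq ^ (Lz + d - n) * tz n (d + 1) (Lz - 1) k := by
  rw [Gz, tz]
  push_cast
  rw [show (k : ℤ) + 1 - 1 = (k : ℤ) by ring, qpz_natCast,
    show (k : ℤ) + 1 + d = (k : ℤ) + (d + 1) by ring,
    show Lz - 2 * ((k : ℤ) + 1) - d = Lz - 1 - 2 * (k : ℤ) - (d + 1) by ring,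
    ← mul_div_assoc, ← mul_assoc, ← zpow_add₀ qq_ne_zero]
  congr 2
  ring_nf

noncomputable def qT (n d : ℤ) (L : ℕ) : RatFunc ℚ :=
  ∑ k ∈ Finset.range (L + 1),
    qq ^ ((k : ℤ) * ((k : ℤ) + d - n)) * qp L /
      (qp k * qpz ((k : ℤ) + d) * qpz ((L : ℤ) - 2 * k - d))

lemma qT_sum (n d : ℤ) (L : ℕ) : qT n d L = ∑ k ∈ Finset.range (L + 1), tz n d (L : ℤ) k := by
  rw [qT]
  refine Finset.sum_congr rfl fun k _ => ?_
  rw [tz, qpz_natCast]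

lemma qT_rec (n d : ℤ) (L : ℕ) :
    qT n d (L + 1) =
      qq ^ ((L : ℤ) + 1 - d) * qT (n + 1) (d - 1) L + qT n d L +
        qq ^ ((L : ℤ) + 1 + d - n) * qT n (d + 1) L := by
  rw [qT_sum, qT_sum, qT_sum, qT_sum]
  push_cast
  have hA : ∑ k ∈ Finset.range (L + 1 + 1), tz (n + 1) (d - 1) ((L : ℤ)) k =
      ∑ k ∈ Finset.range (L + 1), tz (n + 1) (d - 1) ((L : ℤ)) k := by
    rw [Finset.sum_range_succ, tz_zero _ _ _ _ (by push_cast; omega), add_zero]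
  have hB : ∑ k ∈ Finset.range (L + 1 + 1), tz n d ((L : ℤ)) k =
      ∑ k ∈ Finset.range (L + 1), tz n d ((L : ℤ)) k := by
    rw [Finset.sum_range_succ, tz_zero _ _ _ _ (by push_cast; omega), add_zero]
  have hG0 : Gz n d ((L : ℤ) + 1) 0 = 0 := by
    rw [Gz, show (((0:ℕ)) : ℤ) - 1 = (-1 : ℤ) by norm_num,
      qpz_of_neg (by norm_num : (-1:ℤ) < 0)]
    simp
  have hC : ∑ k ∈ Finset.range (L + 1 + 1), Gz n d ((L : ℤ) + 1) k =
      qq ^ ((L : ℤ) + 1 + d - n) * ∑ k ∈ Finset.range (L + 1), tz n (d + 1) ((L : ℤ)) k := by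
    rw [Finset.sum_range_succ', hG0, add_zero, Finset.mul_sum]
    refine Finset.sum_congr rfl fun k _ => ?_
    rw [Gz_B, show ((L : ℤ) + 1) - 1 = (L : ℤ) by ring]
  calc
    ∑ k ∈ Finset.range (L + 1 + 1), tz n d ((L : ℤ) + 1) k
        = ∑ k ∈ Finset.range (L + 1 + 1),
            (qq ^ ((L : ℤ) + 1 - d) * tz (n + 1) (d - 1) ((L : ℤ)) k +
              tz n d ((L : ℤ)) k + Gz n d ((L : ℤ) + 1) k) := by
          refine Finset.sum_congr rfl fun k _ => ?_
          rw [tz_A n d ((L : ℤ) + 1) k (by omega), show ((L : ℤ) + 1) - 1 = (L : ℤ) by ring]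
    _ = _ := by
          rw [Finset.sum_add_distrib, Finset.sum_add_distrib, ← Finset.mul_sum, hA, hB, hC]

lemma qT_eq_zero (n d : ℤ) (L : ℕ) (h : (L : ℤ) < |d|) : qT n d L = 0 := by
  rw [qT]
  refine Finset.sum_eq_zero fun k hk => ?_
  have hk' : (k : ℤ) ≤ L := by
    have := Finset.mem_range.mp hk
    omega
  rcases le_or_gt d 0 with hd | hd
  · have : (k : ℤ) + d < 0 := by
      rcases abs_cases d with ⟨h1, _⟩ | ⟨h1, _⟩ <;> omega
    rw [qpz_of_neg this]
    simp
  · have : (L : ℤ) - 2 * k - d < 0 := by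
      rcases abs_cases d with ⟨h1, _⟩ | ⟨h1, _⟩ <;> omega
    rw [qpz_of_neg this]
    simp

lemma qq_zpow_eq_one {e : ℤ} (h : qq ^ e = 1) : e = 0 := by
  rcases lt_trichotomy e 0 with he | he | he
  · have h2 : qq ^ (-e) = 1 := by
      have : qq ^ (-e) * qq ^ e = 1 := by
        rw [← zpow_add₀ qq_ne_zero]
        norm_num
      rw [h, mul_one] at this
      exact this
    rw [qq_zpow_eq_pow (by omega)] at h2
    exact absurd h2 (qq_pow_ne_one (by omega))
  · exact he
  · rw [qq_zpow_eq_pow (by omega)] at h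
    exact absurd h (qq_pow_ne_one (by omega))

noncomputable def qY (s n a b : ℤ) (L : ℕ) : RatFunc ℚ :=
  ∑ᶠ l : ℤ,
    (qq ^ (l ^ 2 * (s * (s + 1) / 2) + l * ((s + 1) * b - s * a)) *
        qT n (a - b - (s + 1) * l) L -
      qq ^ (l ^ 2 * (s * (s + 1) / 2) + l * s * a + l * (s + 1) * b + 2 * a * b) *
        qT n (-a - b - (s + 1) * l) L)

lemma qY_neg_one (n a b : ℤ) (L : ℕ) : qY (-1) n a b L = 0 := by
  rw [qY]
  have hE : ∀ l : ℤ,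
      (qq ^ (l ^ 2 * ((-1 : ℤ) * (-1 + 1) / 2) + l * ((-1 + 1) * b - (-1) * a)) *
          qT n (a - b - (-1 + 1) * l) L -
        qq ^ (l ^ 2 * ((-1 : ℤ) * (-1 + 1) / 2) + l * (-1) * a + l * (-1 + 1) * b + 2 * a * b) *
          qT n (-a - b - (-1 + 1) * l) L) =
      qq ^ (l * a) * qT n (a - b) L - qq ^ (2 * a * b - l * a) * qT n (-a - b) L := by
    intro l
    rw [show l ^ 2 * ((-1 : ℤ) * (-1 + 1) / 2) + l * ((-1 + 1) * b - -1 * a) = l * a by norm_num,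
      show l ^ 2 * ((-1 : ℤ) * (-1 + 1) / 2) + l * -1 * a + l * (-1 + 1) * b + 2 * a * b =
        2 * a * b - l * a by norm_num; ring,
      show a - b - (-1 + 1) * l = a - b by norm_num,
      show -a - b - (-1 + 1) * l = -a - b by norm_num]
  rw [finsum_congr hE]
  by_cases ha : a = 0
  · subst ha
    have : ∀ l : ℤ, qq ^ (l * 0) * qT n (0 - b) L - qq ^ (2 * 0 * b - l * 0) * qT n (-0 - b) L
        = 0 := by
      intro l
      norm_num
    rw [finsum_congr this, finsum_zero]
  by_cases h1 : qT n (a - b) L = 0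
  · by_cases h2 : qT n (-a - b) L = 0
    · simp [h1, h2]
    · apply finsum_of_infinite_support
      apply Set.infinite_of_injective_forall_mem (f := fun l : ℤ => l)
        (fun x y hxy => hxy)
      intro l
      simp only [Function.mem_support, h1]
      intro hcon
      rw [mul_zero, zero_sub, neg_eq_zero, mul_eq_zero] at hcon
      rcases hcon with hc | hc
      · exact zpow_ne_zero _ qq_ne_zero hc
      · exact h2 hc
  · by_cases h2 : qT n (-a - b) L = 0
    · apply finsum_of_infinite_support
      apply Set.infinite_of_injective_forall_mem (f := fun l : ℤ => l)
        (fun x y hxy => hxy)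
      intro l
      simp only [Function.mem_support, h2]
      intro hcon
      rw [mul_zero, sub_zero, mul_eq_zero] at hcon
      rcases hcon with hc | hc
      · exact zpow_ne_zero _ qq_ne_zero hc
      · exact h1 hc
    · apply finsum_of_infinite_support
      intro hfin
      have hcompl : (Function.support fun l : ℤ =>
          qq ^ (l * a) * qT n (a - b) L - qq ^ (2 * a * b - l * a) * qT n (-a - b) L)ᶜ.Infinite :=
        Set.Finite.infinite_compl hfin
      obtain ⟨x, hx, y, hy, hxy⟩ := hcompl.nontrivial
      simp only [Set.mem_compl_iff, Function.mem_support, not_not] at hx hy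
      have hx' : qq ^ (x * a) * qT n (a - b) L = qq ^ (2 * a * b - x * a) * qT n (-a - b) L :=
        sub_eq_zero.mp hx
      have hy' : qq ^ (y * a) * qT n (a - b) L = qq ^ (2 * a * b - y * a) * qT n (-a - b) L :=
        sub_eq_zero.mp hy
      have hq1 : qq ^ (x * a) * qq ^ (2 * a * b - y * a) * (qT n (a - b) L * qT n (-a - b) L) =
          qq ^ (y * a) * qq ^ (2 * a * b - x * a) * (qT n (a - b) L * qT n (-a - b) L) := by
        calc qq ^ (x * a) * qq ^ (2 * a * b - y * a) * (qT n (a - b) L * qT n (-a - b) L)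
            = (qq ^ (x * a) * qT n (a - b) L) * (qq ^ (2 * a * b - y * a) * qT n (-a - b) L) := by
              ring
          _ = (qq ^ (2 * a * b - x * a) * qT n (-a - b) L) * (qq ^ (y * a) * qT n (a - b) L) := by
              rw [hx', ← hy']
          _ = qq ^ (y * a) * qq ^ (2 * a * b - x * a) * (qT n (a - b) L * qT n (-a - b) L) := by
              ring
      have hq2 : qq ^ (x * a) * qq ^ (2 * a * b - y * a) =
          qq ^ (y * a) * qq ^ (2 * a * b - x * a) :=
        mul_right_cancel₀ (mul_ne_zero h1 h2) hq1
      rw [← zpow_add₀ qq_ne_zero, ← zpow_add₀ qq_ne_zero] at hq2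
      have h3 : qq ^ (x * a + (2 * a * b - y * a) - (y * a + (2 * a * b - x * a))) = 1 := by
        rw [zpow_sub₀ qq_ne_zero, hq2, div_self (zpow_ne_zero _ qq_ne_zero)]
      have := qq_zpow_eq_one h3
      have hxa : (x - y) * a = 0 := by linarith [this]
      rcases mul_eq_zero.mp hxa with hc | hc
      · exact hxy (by omega)
      · exact ha hc

lemma pow4 (e f e' f' : ℤ) (n₁ d₁ d₁' : ℤ) (L' : ℕ) (hd : d₁ = d₁') (he : e + f = e' + f') :
    qq ^ e * (qq ^ f * qT n₁ d₁ L') = qq ^ e' * (qq ^ f' * qT n₁ d₁' L') := by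
  subst hd
  rw [← mul_assoc, ← mul_assoc, ← zpow_add₀ qq_ne_zero, ← zpow_add₀ qq_ne_zero, he]

/-- For `L > 0`:
`Y^{n;t}_{a,b}(L) = q^{L+a−b−n} Y^{n;t}_{a,b−1}(L−1) + Y^{n;t}_{a,b}(L−1)
                    + q^{L−a+b} Y^{n+1;t}_{a,b+1}(L−1)`,
where `t = s/2 ∈ (1/2)ℤ` and `a, b, n` are integers. -/
theorem qY_recurrence (s n a b : ℤ) (L : ℕ) (hL : 0 < L) :
    qY s n a b L =
      qq ^ ((L : ℤ) + a - b - n) * qY s n a (b - 1) (L - 1) + qY s n a b (L - 1) +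
        qq ^ ((L : ℤ) - a + b) * qY s (n + 1) a (b + 1) (L - 1) := by
  obtain ⟨M, rfl⟩ : ∃ M, L = M + 1 := ⟨L - 1, by omega⟩
  rw [Nat.add_sub_cancel]
  rcases eq_or_ne s (-1) with hs | hs
  · subst hs
    rw [qY_neg_one, qY_neg_one, qY_neg_one, qY_neg_one]
    simp
  have hs1 : s + 1 ≠ 0 := by omega
  have hfin : ∀ (e : ℤ → ℤ) (n' c : ℤ) (L' : ℕ),
      (Function.support fun l : ℤ => qq ^ (e l) * qT n' (c - (s + 1) * l) L').Finite := by
    intro e n' c L'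
    have hinj : Function.Injective fun l : ℤ => c - (s + 1) * l := by
      intro x y hxy
      simp only at hxy
      have hc : (s + 1) * x = (s + 1) * y := by omega
      exact mul_left_cancel₀ hs1 hc
    apply Set.Finite.subset ((Set.finite_Icc (-(L' : ℤ)) (L' : ℤ)).preimage hinj.injOn)
    intro l hl
    simp only [Function.mem_support] at hl
    have hT : qT n' (c - (s + 1) * l) L' ≠ 0 := by
      intro h0
      exact hl (by rw [h0, mul_zero])
    have habs : |c - (s + 1) * l| ≤ (L' : ℤ) := by
      by_contra hcon
      exact hT (qT_eq_zero _ _ _ (not_le.mp hcon))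
    simp only [Set.mem_preimage, Set.mem_Icc]
    exact abs_le.mp habs
  have fb1 : (Function.support (fun l : ℤ => qq ^ (l ^ 2 * (s * (s + 1) / 2) + l * ((s + 1) * (b - 1) - s * a)) * qT n (a - (b - 1) - (s + 1) * l) M -
      qq ^ (l ^ 2 * (s * (s + 1) / 2) + l * s * a + l * (s + 1) * (b - 1) + 2 * a * (b - 1)) * qT n (-a - (b - 1) - (s + 1) * l) M)).Finite := by
    apply Set.Finite.subset ((hfin (fun l => l ^ 2 * (s * (s + 1) / 2) + l * ((s + 1) * (b - 1) - s * a)) n (a - (b - 1)) M).union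
      (hfin (fun l => l ^ 2 * (s * (s + 1) / 2) + l * s * a + l * (s + 1) * (b - 1) + 2 * a * (b - 1)) n (-a - (b - 1)) M))
    exact Function.support_sub _ _
  have fb : (Function.support (fun l : ℤ => qq ^ (l ^ 2 * (s * (s + 1) / 2) + l * ((s + 1) * b - s * a)) * qT n (a - b - (s + 1) * l) M -
      qq ^ (l ^ 2 * (s * (s + 1) / 2) + l * s * a + l * (s + 1) * b + 2 * a * b) * qT n (-a - b - (s + 1) * l) M)).Finite := by
    apply Set.Finite.subset ((hfin (fun l => l ^ 2 * (s * (s + 1) / 2) + l * ((s + 1) * b - s * a)) n (a - b) M).union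
      (hfin (fun l => l ^ 2 * (s * (s + 1) / 2) + l * s * a + l * (s + 1) * b + 2 * a * b) n (-a - b) M))
    exact Function.support_sub _ _
  have fbp : (Function.support (fun l : ℤ => qq ^ (l ^ 2 * (s * (s + 1) / 2) + l * ((s + 1) * (b + 1) - s * a)) * qT (n + 1) (a - (b + 1) - (s + 1) * l) M -
      qq ^ (l ^ 2 * (s * (s + 1) / 2) + l * s * a + l * (s + 1) * (b + 1) + 2 * a * (b + 1)) * qT (n + 1) (-a - (b + 1) - (s + 1) * l) M)).Finite := by
    apply Set.Finite.subset ((hfin (fun l => l ^ 2 * (s * (s + 1) / 2) + l * ((s + 1) * (b + 1) - s * a)) (n + 1) (a - (b + 1)) M).union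
      (hfin (fun l => l ^ 2 * (s * (s + 1) / 2) + l * s * a + l * (s + 1) * (b + 1) + 2 * a * (b + 1)) (n + 1) (-a - (b + 1)) M))
    exact Function.support_sub _ _
  have key : ∀ l : ℤ,
      (qq ^ (l ^ 2 * (s * (s + 1) / 2) + l * ((s + 1) * b - s * a)) * qT n (a - b - (s + 1) * l) (M + 1) -
        qq ^ (l ^ 2 * (s * (s + 1) / 2) + l * s * a + l * (s + 1) * b + 2 * a * b) * qT n (-a - b - (s + 1) * l) (M + 1)) =
      qq ^ (((M + 1 : ℕ) : ℤ) + a - b - n) * ((fun l : ℤ => qq ^ (l ^ 2 * (s * (s + 1) / 2) + l * ((s + 1) * (b - 1) - s * a)) * qT n (a - (b - 1) - (s + 1) * l) M -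
      qq ^ (l ^ 2 * (s * (s + 1) / 2) + l * s * a + l * (s + 1) * (b - 1) + 2 * a * (b - 1)) * qT n (-a - (b - 1) - (s + 1) * l) M) l) +
      ((fun l : ℤ => qq ^ (l ^ 2 * (s * (s + 1) / 2) + l * ((s + 1) * b - s * a)) * qT n (a - b - (s + 1) * l) M -
      qq ^ (l ^ 2 * (s * (s + 1) / 2) + l * s * a + l * (s + 1) * b + 2 * a * b) * qT n (-a - b - (s + 1) * l) M) l) +
      qq ^ (((M + 1 : ℕ) : ℤ) - a + b) * ((fun l : ℤ => qq ^ (l ^ 2 * (s * (s + 1) / 2) + l * ((s + 1) * (b + 1) - s * a)) * qT (n + 1) (a - (b + 1) - (s + 1) * l) M -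
      qq ^ (l ^ 2 * (s * (s + 1) / 2) + l * s * a + l * (s + 1) * (b + 1) + 2 * a * (b + 1)) * qT (n + 1) (-a - (b + 1) - (s + 1) * l) M) l) := by
    intro l
    simp only
    rw [qT_rec n (a - b - (s + 1) * l) M, qT_rec n (-a - b - (s + 1) * l) M]
    have h1 := pow4 (l ^ 2 * (s * (s + 1) / 2) + l * ((s + 1) * b - s * a)) ((M : ℤ) + 1 - (a - b - (s + 1) * l))
        (((M + 1 : ℕ) : ℤ) - a + b) (l ^ 2 * (s * (s + 1) / 2) + l * ((s + 1) * (b + 1) - s * a))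
        (n + 1) (a - b - (s + 1) * l - 1) (a - (b + 1) - (s + 1) * l) M (by ring)
        (by push_cast; ring)
    have h3 := pow4 (l ^ 2 * (s * (s + 1) / 2) + l * ((s + 1) * b - s * a)) ((M : ℤ) + 1 + (a - b - (s + 1) * l) - n)
        (((M + 1 : ℕ) : ℤ) + a - b - n) (l ^ 2 * (s * (s + 1) / 2) + l * ((s + 1) * (b - 1) - s * a))
        n (a - b - (s + 1) * l + 1) (a - (b - 1) - (s + 1) * l) M (by ring)
        (by push_cast; ring)
    have h4 := pow4 (l ^ 2 * (s * (s + 1) / 2) + l * s * a + l * (s + 1) * b + 2 * a * b) ((M : ℤ) + 1 - (-a - b - (s + 1) * l))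
        (((M + 1 : ℕ) : ℤ) - a + b) (l ^ 2 * (s * (s + 1) / 2) + l * s * a + l * (s + 1) * (b + 1) + 2 * a * (b + 1))
        (n + 1) (-a - b - (s + 1) * l - 1) (-a - (b + 1) - (s + 1) * l) M (by ring)
        (by push_cast; ring)
    have h6 := pow4 (l ^ 2 * (s * (s + 1) / 2) + l * s * a + l * (s + 1) * b + 2 * a * b) ((M : ℤ) + 1 + (-a - b - (s + 1) * l) - n)
        (((M + 1 : ℕ) : ℤ) + a - b - n) (l ^ 2 * (s * (s + 1) / 2) + l * s * a + l * (s + 1) * (b - 1) + 2 * a * (b - 1))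
        n (-a - b - (s + 1) * l + 1) (-a - (b - 1) - (s + 1) * l) M (by ring)
        (by push_cast; ring)
    linear_combination h1 + h3 - h4 - h6
  rw [qY, qY, qY, qY, finsum_congr key]
  have fA : (Function.support fun l : ℤ => qq ^ (((M + 1 : ℕ) : ℤ) + a - b - n) * ((fun l : ℤ => qq ^ (l ^ 2 * (s * (s + 1) / 2) + l * ((s + 1) * (b - 1) - s * a)) * qT n (a - (b - 1) - (s + 1) * l) M -
      qq ^ (l ^ 2 * (s * (s + 1) / 2) + l * s * a + l * (s + 1) * (b - 1) + 2 * a * (b - 1)) * qT n (-a - (b - 1) - (s + 1) * l) M) l)).Finite := by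
    apply Set.Finite.subset fb1
    intro l hl
    simp only [Function.mem_support] at hl ⊢
    intro h0
    exact hl (by rw [h0, mul_zero])
  have fC : (Function.support fun l : ℤ => qq ^ (((M + 1 : ℕ) : ℤ) - a + b) * ((fun l : ℤ => qq ^ (l ^ 2 * (s * (s + 1) / 2) + l * ((s + 1) * (b + 1) - s * a)) * qT (n + 1) (a - (b + 1) - (s + 1) * l) M -
      qq ^ (l ^ 2 * (s * (s + 1) / 2) + l * s * a + l * (s + 1) * (b + 1) + 2 * a * (b + 1)) * qT (n + 1) (-a - (b + 1) - (s + 1) * l) M) l)).Finite := by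
    apply Set.Finite.subset fbp
    intro l hl
    simp only [Function.mem_support] at hl ⊢
    intro h0
    exact hl (by rw [h0, mul_zero])
  rw [finsum_add_distrib (Set.Finite.subset (fA.union fb) (Function.support_add _ _)) fC,
    finsum_add_distrib fA fb,
    ← mul_finsum _ _, ← mul_finsum _ _]
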